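/- Suppose a_{b2} = 0 and a_{b1} < 0, so that ã2 = 0 and ã1 = λ·μ·a_{b1} < 0. Then the values ρ1 = 1/(λμ(−a_{b1})) and ρ2 = √(ρ1² + (2b)²) satisfy the Configuration-I equilibrium equations and the geometric constraints. -/
import Mathlib


/-- In Configuration I with a_{b2} = 0 and a_{b1} < 0, the values
ρ1 = 1/(λμ(−a_{b1})) and ρ2 = √(ρ1² + (2b)²) satisfy the equilibrium equations
(with ã1 = λμa_{b1}, ã2 = (1−λ)μa_{b2} = 0) and the geometric constraints. -/
theorem stmt7 (μ lam ab1 ab2 b ρ1 ρ2 : ℝ)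
    (hμ : μ > 0) (hlam1 : 0 < lam) (hlam2 : lam < 1)
    (hab1 : ab1 ∈ Set.Icc (-1 : ℝ) 1) (hab2 : ab2 = 0) (hab1neg : ab1 < 0)
    (hb : b > 0)
    (hρ1 : ρ1 = 1 / (lam * μ * (-ab1)))
    (hρ2 : ρ2 = Real.sqrt (ρ1 ^ 2 + (2 * b) ^ 2)) :
    ((1 - lam) * μ * ab2) * (ρ1 ^ 2 + ρ2 ^ 2 - 4 * b ^ 2)
        + 2 * (lam * μ * ab1) * ρ1 * ρ2 + 2 * ρ2 = 0 ∧
    (lam * μ * ab1) * (ρ1 ^ 2 + ρ2 ^ 2 - 4 * b ^ 2)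
        + 2 * ((1 - lam) * μ * ab2) * ρ1 * ρ2 + 2 * ρ1 = 0 ∧
    ρ1 > 0 ∧ ρ2 > 0 ∧ ρ1 + ρ2 > 2 * b ∧ |ρ1 - ρ2| < 2 * b := by
  subst hab2
  have hden : lam * μ * (-ab1) > 0 :=
    mul_pos (mul_pos hlam1 hμ) (neg_pos.mpr hab1neg)
  have hρ1pos : ρ1 > 0 := by rw [hρ1]; exact one_div_pos.mpr hden
  have haρ1 : (lam * μ * ab1) * ρ1 = -1 := by
    have : (lam * μ * (-ab1)) * ρ1 = 1 := by
      rw [hρ1, mul_one_div, div_self (ne_of_gt hden)]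
    nlinarith
  have hρ2sq : ρ2 ^ 2 = ρ1 ^ 2 + (2 * b) ^ 2 := by
    rw [hρ2, Real.sq_sqrt (by positivity)]
  have hρ2pos : ρ2 > 0 := by rw [hρ2]; positivity
  have hρ2gt : ρ2 > 2 * b := by
    nlinarith [hρ2sq, sq_nonneg ρ1]
  refine ⟨by nlinarith, by nlinarith, hρ1pos, hρ2pos, by nlinarith, ?_⟩
  have hlt : ρ1 < ρ2 := by nlinarith
  rw [abs_sub_lt_iff]
  constructor <;> nlinarith
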